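/- arXiv:1612.09069 — 2 statements merged into one kernel-verified Lean document; each statement's English description precedes it below -/
import Mathlib

section
/- Let v ∈ E, set z = v − η·∇f(v), let x̂ be a global minimizer of h(w) = (1/2)·‖w − z‖² + η·g(w), and let x⁺ ∈ E satisfy h(x⁺) ≤ h(x̂) + ε for some ε ≥ 0 (an ε-inexact proximal step at v). Then F(x⁺) ≤ F(v) − ((ρ − L)/2)·‖x⁺ − v‖² + ρ·ε. -/
open InnerProductSpace

private lemma descent_lemma_aux
    {E : Type*} [NormedAddCommGroup E] [InnerProductSpace ℝ E] [CompleteSpace E]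
    (f : E → ℝ) (f' : E → E) (L : ℝ)
    (hf : ∀ x, HasGradientAt f (f' x) x)
    (hlip : ∀ x y, ‖f' x - f' y‖ ≤ L * ‖x - y‖)
    (v x : E) :
    f x ≤ f v + ⟪f' v, x - v⟫_ℝ + L / 2 * ‖x - v‖ ^ 2 := by
  set u := x - v with hu
  set φ : ℝ → ℝ := fun t => f (v + t • u) - t * ⟪f' v, u⟫_ℝ - L / 2 * t ^ 2 * ‖u‖ ^ 2 with hφ
  have hder : ∀ t : ℝ, HasDerivAt φ
      (⟪f' (v + t • u), u⟫_ℝ - ⟪f' v, u⟫_ℝ - L * t * ‖u‖ ^ 2) t := by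
    intro t
    have hc : HasDerivAt (fun t : ℝ => v + t • u) u t := by
      simpa using ((hasDerivAt_id t).smul_const u).const_add v
    have h1 : HasDerivAt (fun t : ℝ => f (v + t • u)) (⟪f' (v + t • u), u⟫_ℝ) t := by
      have := ((hf (v + t • u)).hasFDerivAt.comp_hasDerivAt t hc)
      exact this
    have h2 : HasDerivAt (fun t : ℝ => t * ⟪f' v, u⟫_ℝ) (⟪f' v, u⟫_ℝ) t := by
      simpa using (hasDerivAt_id t).mul_const (⟪f' v, u⟫_ℝ)
    have h3 : HasDerivAt (fun t : ℝ => L / 2 * t ^ 2 * ‖u‖ ^ 2) (L * t * ‖u‖ ^ 2) t := by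
      have : HasDerivAt (fun t : ℝ => t ^ 2) (2 * t) t := by
        simpa using hasDerivAt_pow 2 t
      have := (this.const_mul (L / 2)).mul_const (‖u‖ ^ 2)
      rw [show L * t * ‖u‖ ^ 2 = L / 2 * (2 * t) * ‖u‖ ^ 2 by ring]; exact this
    exact (h1.sub h2).sub h3
  have hmono : AntitoneOn φ (Set.Icc 0 1) := by
    apply antitoneOn_of_deriv_nonpos (convex_Icc 0 1)
    · exact fun t _ => (hder t).differentiableAt.continuousAt.continuousWithinAt
    · intro t ht
      exact (hder t).differentiableAt.differentiableWithinAt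
    · intro t ht
      rw [interior_Icc] at ht
      rw [(hder t).deriv]
      have h1 : ⟪f' (v + t • u) - f' v, u⟫_ℝ ≤ L * t * ‖u‖ ^ 2 := by
        calc ⟪f' (v + t • u) - f' v, u⟫_ℝ ≤ ‖f' (v + t • u) - f' v‖ * ‖u‖ :=
              real_inner_le_norm _ _
          _ ≤ (L * ‖(v + t • u) - v‖) * ‖u‖ := by
              gcongr; exact hlip _ _
          _ = L * (|t| * ‖u‖) * ‖u‖ := by rw [add_sub_cancel_left, norm_smul]; simp
          _ = L * t * ‖u‖ ^ 2 := by rw [abs_of_pos ht.1]; ring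
      have := inner_sub_left (𝕜 := ℝ) (f' (v + t • u)) (f' v) u
      linarith [this ▸ h1]
  have h01 := hmono (Set.mem_Icc.2 ⟨le_refl 0, zero_le_one⟩)
    (Set.mem_Icc.2 ⟨zero_le_one, le_refl 1⟩) zero_le_one
  simp only [hφ, zero_smul, add_zero, one_smul, zero_mul] at h01
  have : v + u = x := by rw [hu]; abel
  rw [this] at h01
  nlinarith [h01]

/-- Proposition 3: sufficient decrease for an ε-inexact proximal step.
If `x̂` minimizes `h(w) = (1/2)‖w - z‖² + η g(w)` with `z = v - η • ∇f v`, and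
`h x⁺ ≤ h x̂ + ε`, then `F x⁺ ≤ F v - ((ρ - L)/2)‖x⁺ - v‖² + ρ ε`. -/
theorem inexact_prox_sufficient_decrease
    {E : Type*} [NormedAddCommGroup E] [InnerProductSpace ℝ E] [FiniteDimensional ℝ E]
    (f g F : E → ℝ) (f' : E → E) (L η ρ : ℝ)
    (hL : 0 < L)
    (hf : ∀ x, HasGradientAt f (f' x) x)
    (hlip : ∀ x y, ‖f' x - f' y‖ ≤ L * ‖x - y‖)
    (hg : LowerSemicontinuous g)
    (hF : ∀ x, F x = f x + g x)
    (hη : 0 < η) (hηL : η < 1 / L) (hρ : ρ = 1 / η)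
    (v xhat xp : E) (ε : ℝ) (hε : 0 ≤ ε)
    (hxhat : ∀ w : E, (1 / 2) * ‖xhat - (v - η • f' v)‖ ^ 2 + η * g xhat ≤
      (1 / 2) * ‖w - (v - η • f' v)‖ ^ 2 + η * g w)
    (hxp : (1 / 2) * ‖xp - (v - η • f' v)‖ ^ 2 + η * g xp ≤
      ((1 / 2) * ‖xhat - (v - η • f' v)‖ ^ 2 + η * g xhat) + ε) :
    F xp ≤ F v - ((ρ - L) / 2) * ‖xp - v‖ ^ 2 + ρ * ε := by
  have key : (1 / 2) * ‖xp - (v - η • f' v)‖ ^ 2 + η * g xp ≤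
      (1 / 2) * ‖v - (v - η • f' v)‖ ^ 2 + η * g v + ε := by
    linarith [hxhat v]
  have hexp1 : ‖v - (v - η • f' v)‖ ^ 2 = η ^ 2 * ‖f' v‖ ^ 2 := by
    have : v - (v - η • f' v) = η • f' v := by abel
    rw [this, norm_smul]
    simp [abs_of_pos hη, mul_pow]
  have hexp2 : ‖xp - (v - η • f' v)‖ ^ 2 =
      ‖xp - v‖ ^ 2 + 2 * (η * ⟪f' v, xp - v⟫_ℝ) + η ^ 2 * ‖f' v‖ ^ 2 := by
    have h : xp - (v - η • f' v) = (xp - v) + η • f' v := by abel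
    rw [h, norm_add_sq_real, norm_smul, real_inner_smul_right]
    rw [real_inner_comm]
    simp [abs_of_pos hη, mul_pow]
  rw [hexp1, hexp2] at key
  -- key : 1/2‖xp-v‖² + η⟪f'v,xp-v⟫ + η g xp ≤ η g v + ε  (after cancelling)
  have descent := descent_lemma_aux f f' L hf hlip v xp
  have hρη : ρ * η = 1 := by rw [hρ]; field_simp
  have hρ2 : 0 < ρ := by rw [hρ]; positivity
  -- multiply key by ρ
  have key2 : ρ * ((1 / 2) * (‖xp - v‖ ^ 2 + 2 * (η * ⟪f' v, xp - v⟫_ℝ) + η ^ 2 * ‖f' v‖ ^ 2)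
      + η * g xp) ≤ ρ * ((1 / 2) * (η ^ 2 * ‖f' v‖ ^ 2) + η * g v + ε) := by
    apply mul_le_mul_of_nonneg_left _ hρ2.le
    linarith [key]
  have key3 : (ρ / 2) * ‖xp - v‖ ^ 2 + ⟪f' v, xp - v⟫_ℝ + g xp ≤ g v + ρ * ε := by
    nlinarith [key2, hρη]
  rw [hF, hF]
  nlinarith [descent, key3]
end

section
/- Suppose that in Algorithm niAPG every proximal step is exact, i.e., for every k ≥ 1, x_{k+1} is a global minimizer of w ↦ (1/2)·‖w − z_k‖² + η·g(w). Then for every k ≥ 1: Δ_{k+q+1} ≤ Δ_k − ((ρ − L)/2)·min_{t = k,…,k+q} ‖x_{t+1} − v_t‖². -/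
open scoped RealInnerProductSpace

lemma descent_lemma
    {E : Type*} [NormedAddCommGroup E] [InnerProductSpace ℝ E] [CompleteSpace E]
    (f : E → ℝ) (f' : E → E) (L : ℝ) (hL : 0 ≤ L)
    (hf : ∀ x, HasGradientAt f (f' x) x)
    (hlip : ∀ x y, ‖f' x - f' y‖ ≤ L * ‖x - y‖)
    (a b : E) :
    f b ≤ f a + ⟪f' a, b - a⟫ + L / 2 * ‖b - a‖ ^ 2 := by
  set u := b - a with hu
  have hpath : ∀ s : ℝ, HasDerivAt (fun s : ℝ => f (a + s • u)) ⟪f' (a + s • u), u⟫ s := by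
    intro s
    have h1 : HasDerivAt (fun s : ℝ => a + s • u) u s := by
      simpa using ((hasDerivAt_id s).smul_const u).const_add a
    have h2 := ((hf (a + s • u)).hasFDerivAt).comp_hasDerivAt s h1
    simp only [InnerProductSpace.toDual_apply_apply] at h2; exact h2
  have hcontf' : Continuous f' :=
    (LipschitzWith.of_dist_le_mul (K := ⟨L, hL⟩) (fun x y => by
      rw [dist_eq_norm, dist_eq_norm]; exact hlip x y)).continuous
  have hcont : Continuous fun s : ℝ => ⟪f' (a + s • u), u⟫ := by
    exact (hcontf'.comp (by continuity)).inner continuous_const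
  have key : f (a + (1:ℝ) • u) - f (a + (0:ℝ) • u)
      = ∫ s in (0:ℝ)..1, ⟪f' (a + s • u), u⟫ := by
    exact (intervalIntegral.integral_eq_sub_of_hasDerivAt (fun s _ => hpath s)
      (hcont.intervalIntegrable 0 1)).symm
  have hbound : ∫ s in (0:ℝ)..1, ⟪f' (a + s • u), u⟫
      ≤ ∫ s in (0:ℝ)..1, (⟪f' a, u⟫ + L * s * ‖u‖ ^ 2) := by
    apply intervalIntegral.integral_mono_on (by norm_num) (hcont.intervalIntegrable 0 1)
      ((by continuity : Continuous fun s : ℝ => ⟪f' a, u⟫ + L * s * ‖u‖ ^ 2).intervalIntegrable 0 1)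
    intro s hs
    have h1 : ⟪f' (a + s • u) - f' a, u⟫ ≤ L * s * ‖u‖ ^ 2 := by
      calc ⟪f' (a + s • u) - f' a, u⟫ ≤ ‖f' (a + s • u) - f' a‖ * ‖u‖ := real_inner_le_norm _ _
        _ ≤ (L * ‖(a + s • u) - a‖) * ‖u‖ :=
            mul_le_mul_of_nonneg_right (hlip _ _) (norm_nonneg _)
        _ = L * s * ‖u‖ ^ 2 := by
            rw [add_sub_cancel_left, norm_smul, Real.norm_eq_abs,
              abs_of_nonneg hs.1]
            ring
    have h2 : ⟪f' (a + s • u) - f' a, u⟫ = ⟪f' (a + s • u), u⟫ - ⟪f' a, u⟫ :=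
      inner_sub_left _ _ _
    linarith [h1, h2.symm.le, h2.le]
  have hval : ∫ s in (0:ℝ)..1, (⟪f' a, u⟫ + L * s * ‖u‖ ^ 2)
      = ⟪f' a, u⟫ + L / 2 * ‖u‖ ^ 2 := by
    rw [intervalIntegral.integral_add ((by continuity : Continuous fun _ : ℝ => ⟪f' a, u⟫).intervalIntegrable 0 1)
      ((by continuity : Continuous fun s : ℝ => L * s * ‖u‖ ^ 2).intervalIntegrable 0 1)]
    have : ∫ s in (0:ℝ)..1, L * s * ‖u‖ ^ 2 = L / 2 * ‖u‖ ^ 2 := by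
      have : (fun s : ℝ => L * s * ‖u‖ ^ 2) = fun s : ℝ => (L * ‖u‖ ^ 2) * s := by
        funext s; ring
      rw [this, intervalIntegral.integral_const_mul, integral_id]
      ring
    simp [this]
  have hab : a + (1:ℝ) • u = b := by simp [hu]
  have ha0 : a + (0:ℝ) • u = a := by simp
  rw [hab, ha0] at key
  linarith [key, hbound, hval.le, hval.ge]
/-- Proposition 7: decrease of `Δ` over a window, exact proximal steps.
If in Algorithm niAPG every proximal step is exact, then for every `k ≥ 1`,
`Δ_{k+q+1} ≤ Δ_k - ((ρ - L)/2) * min_{t = k,…,k+q} ‖x_{t+1} - v_t‖²`. -/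
theorem niAPG_exact_Delta_decrease
    {E : Type*} [NormedAddCommGroup E] [InnerProductSpace ℝ E] [FiniteDimensional ℝ E]
    (f g F : E → ℝ) (f' : E → E) (L η ρ : ℝ)
    (hL : 0 < L)
    (hf : ∀ x, HasGradientAt f (f' x) x)
    (hlip : ∀ x y, ‖f' x - f' y‖ ≤ L * ‖x - y‖)
    (hg : LowerSemicontinuous g)
    (hF : ∀ x, F x = f x + g x)
    (hη : 0 < η) (hηL : η < 1 / L) (hρ : ρ = 1 / η)
    (q : ℕ) (x y v z : ℕ → E) (Δ : ℕ → ℝ)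
    (hx01 : x 0 = x 1)
    (hy : ∀ k, 1 ≤ k → y k = x k + ((((k : ℝ) - 1) / ((k : ℝ) + 2)) • (x k - x (k - 1))))
    (hΔ : ∀ k, ∀ hk : 1 ≤ k, Δ k =
      (Finset.Icc (max 1 (k - q)) k).sup' (Finset.nonempty_Icc.mpr (by omega))
        (fun t => F (x t)))
    (hv : ∀ k, 1 ≤ k → v k = if F (y k) ≤ Δ k then y k else x k)
    (hz : ∀ k, 1 ≤ k → z k = v k - η • f' (v k))
    (hprox : ∀ k, 1 ≤ k → ∀ w : E,
      (1 / 2) * ‖x (k + 1) - z k‖ ^ 2 + η * g (x (k + 1)) ≤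
        (1 / 2) * ‖w - z k‖ ^ 2 + η * g w) :
    ∀ k, 1 ≤ k →
      Δ (k + q + 1) ≤ Δ k - ((ρ - L) / 2) *
        (Finset.Icc k (k + q)).inf' (Finset.nonempty_Icc.mpr (by omega))
          (fun t => ‖x (t + 1) - v t‖ ^ 2) := by
  have hρL : L < ρ := by
    rw [hρ]
    rw [lt_div_iff₀ hL] at hηL
    rw [lt_div_iff₀ hη]
    linarith [hηL]
  have hc : 0 ≤ (ρ - L) / 2 := by linarith
  -- per-step decrease
  have step : ∀ t, 1 ≤ t →
      F (x (t + 1)) ≤ F (v t) - (ρ - L) / 2 * ‖x (t + 1) - v t‖ ^ 2 := by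
    intro t ht
    have hp := hprox t ht (v t)
    rw [hz t ht] at hp
    set u := x (t + 1) with hudef
    set p := v t with hpdef
    have e1 : ‖u - (p - η • f' p)‖ ^ 2
        = ‖u - p‖ ^ 2 + 2 * (η * ⟪u - p, f' p⟫) + η ^ 2 * ‖f' p‖ ^ 2 := by
      have : u - (p - η • f' p) = (u - p) + η • f' p := by abel
      rw [this, norm_add_sq_real, real_inner_smul_right, norm_smul,
        Real.norm_eq_abs, abs_of_pos hη, mul_pow]
    have e2 : ‖p - (p - η • f' p)‖ ^ 2 = η ^ 2 * ‖f' p‖ ^ 2 := by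
      have : p - (p - η • f' p) = η • f' p := by abel
      rw [this, norm_smul, Real.norm_eq_abs, abs_of_pos hη, mul_pow]
    rw [e1, e2] at hp
    -- g u ≤ g p - ⟪u-p, f' p⟫ - ρ/2 ‖u-p‖²
    have hg' : g u ≤ g p - ⟪u - p, f' p⟫ - ρ / 2 * ‖u - p‖ ^ 2 := by
      have h2 : η * g u ≤ η * (g p - ⟪u - p, f' p⟫ - ρ / 2 * ‖u - p‖ ^ 2) := by
        have : η * (ρ / 2 * ‖u - p‖ ^ 2) = 1 / 2 * ‖u - p‖ ^ 2 := by
          rw [hρ]; field_simp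
        nlinarith [hp, this]
      exact le_of_mul_le_mul_left (by linarith [h2]) hη
    have hdesc := descent_lemma f f' L hL.le hf hlip p u
    have hcomm : ⟪f' p, u - p⟫ = ⟪u - p, f' p⟫ := real_inner_comm _ _
    rw [hF u, hF p]
    rw [hcomm] at hdesc
    nlinarith [hdesc, hg']
  -- F (x t) ≤ Δ t
  have hxΔ : ∀ t, 1 ≤ t → F (x t) ≤ Δ t := by
    intro t ht
    rw [hΔ t ht]
    have hmem : t ∈ Finset.Icc (max 1 (t - q)) t := by
      rw [Finset.mem_Icc]
      omega
    exact Finset.le_sup' (fun t => F (x t)) hmem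
  have hvΔ : ∀ t, 1 ≤ t → F (v t) ≤ Δ t := by
    intro t ht
    rw [hv t ht]
    split_ifs with h
    · exact h
    · exact hxΔ t ht
  have step' : ∀ t, 1 ≤ t →
      F (x (t + 1)) ≤ Δ t - (ρ - L) / 2 * ‖x (t + 1) - v t‖ ^ 2 := by
    intro t ht
    linarith [step t ht, hvΔ t ht]
  have hmono : ∀ t, 1 ≤ t → Δ (t + 1) ≤ Δ t := by
    intro t ht
    rw [hΔ (t + 1) (by omega)]
    apply Finset.sup'_le
    intro s hs
    rw [Finset.mem_Icc] at hs
    rcases eq_or_lt_of_le hs.2 with heq | hlt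
    · subst heq
      have := step' t ht
      nlinarith [mul_nonneg hc (sq_nonneg (‖x (t + 1) - v t‖)), this]
    · rw [hΔ t ht]
      have hmem : s ∈ Finset.Icc (max 1 (t - q)) t := by
        rw [Finset.mem_Icc]
        omega
      exact Finset.le_sup' (fun t => F (x t)) hmem
  have hΔle : ∀ k t : ℕ, 1 ≤ k → k ≤ t → Δ t ≤ Δ k := by
    intro k t hk hkt
    induction t, hkt using Nat.le_induction with
    | base => exact le_rfl
    | succ n hn ih => exact le_trans (hmono n (by omega)) ih
  intro k hk
  rw [hΔ (k + q + 1) (by omega)]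
  apply Finset.sup'_le
  intro s hs
  rw [Finset.mem_Icc] at hs
  obtain ⟨t, rfl⟩ : ∃ t, s = t + 1 := ⟨s - 1, by omega⟩
  have htk : k ≤ t := by omega
  have htkq : t ≤ k + q := by omega
  have hinf : (Finset.Icc k (k + q)).inf' (Finset.nonempty_Icc.mpr (by omega))
      (fun t => ‖x (t + 1) - v t‖ ^ 2) ≤ ‖x (t + 1) - v t‖ ^ 2 :=
    Finset.inf'_le _ (Finset.mem_Icc.mpr ⟨htk, htkq⟩)
  have h1 := step' t (by omega)
  have h2 := hΔle k t hk htk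
  nlinarith [mul_le_mul_of_nonneg_left hinf hc]
end
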